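/- Let X, V, W, Y be real Banach spaces, A : X × V → W Fréchet differentiable at (x†,u†) and C : V → Y Fréchet differentiable at u†, with A(x†,u†) = 0 and C(u†) = y. Fix ρ > 0, m, o, r, q ∈ [1,∞), t > 1, C̄_L ≥ 0, L ≥ 0, c_α > 0, x₀ ∈ X, u₀ ∈ V, D ⊆ X × V, and set R₂(x,u) := (1/r)‖x − x₀‖^r + (1/q)‖u − u₀‖^q. Let ξ be a continuous linear functional on X × V with R₂(x,u) ≥ R₂(x†,u†) + ξ(x − x†, u − u†) for all (x,u), define the Bregman distance D_ξ(x,u) := R₂(x,u) − R₂(x†,u†) − ξ(x − x†, u − u†), and assume the source condition ξ = v ∘ 𝐅'(x†,u†) for some continuous linear functional v on W × Y (supremum norm) with L‖v‖ < 1, where 𝐅'(x†,u†)(h,w) = (A'(x†,u†)(h,w), C'(u†)w). Assume that for all (x,u) ∈ D: ‖A'(x†,u†)(x − x†, u − u†)‖ + ‖C'(u†)(u − u†)‖ ≤ C̄_L ((ρ/m)‖A(x,u)‖^m + (1/o)‖C(u) − y‖^o)^{1/t} + L·D_ξ(x,u). Then there exists a constant K, depending only on o, t, ρ, m, c_α,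 ‖v‖, C̄_L and L but not on δ, such that: for every δ > 0, every yδ ∈ Y with ‖y − yδ‖ ≤ δ, and every (xα,uα) ∈ D satisfying the minimality estimate (ρ/m)‖A(xα,uα)‖^m + (1/o)‖C(uα) − yδ‖^o + α R₂(xα,uα) ≤ δ^o/o + α R₂(x†,u†) with the a priori parameter choice α = c_α δ^{o(t−1)/t}, one has D_ξ(xα,uα) ≤ K δ^{o/t}. -/

import Mathlib

lemma myRpowAdd (o : ℝ) (ho : 1 ≤ o) {x y : ℝ} (hx : 0 ≤ x) (hy : 0 ≤ y) :
    (x + y) ^ o ≤ 2 ^ o * (x ^ o + y ^ o) := by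
  have h2o : (0:ℝ) < 2 ^ o := Real.rpow_pos_of_pos (by norm_num) o
  rcases le_total x y with h | h
  · have h1 : (x + y) ^ o ≤ (2 * y) ^ o :=
      Real.rpow_le_rpow (by linarith) (by linarith) (by linarith)
    rw [Real.mul_rpow (by norm_num) hy] at h1
    nlinarith [Real.rpow_nonneg hx o]
  · have h1 : (x + y) ^ o ≤ (2 * x) ^ o :=
      Real.rpow_le_rpow (by linarith) (by linarith) (by linarith)
    rw [Real.mul_rpow (by norm_num) hx] at h1
    nlinarith [Real.rpow_nonneg hy o]

lemma myAbsorb {S a b t : ℝ} (ht : 1 < t) (ha : 0 < a) (hb : 0 ≤ b)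
    (h : S ≤ a + b * S ^ (1 / t)) : S ≤ 2 * a + (2 * b) ^ (t / (t - 1)) := by
  have ht0 : (0:ℝ) < t := by linarith
  have ht1 : (0:ℝ) < t - 1 := by linarith
  by_cases hc : S ≤ 2 * a
  · have : 0 ≤ (2 * b) ^ (t / (t - 1)) := Real.rpow_nonneg (by linarith) _
    linarith
  push_neg at hc
  have hSpos : 0 < S := by linarith
  have hS1t : 0 < S ^ (1 / t) := Real.rpow_pos_of_pos hSpos _
  have key : S ^ ((t - 1) / t) ≤ 2 * b := by
    have e : S ^ ((t - 1) / t) = S / S ^ (1 / t) := by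
      rw [eq_div_iff hS1t.ne', ← Real.rpow_add hSpos]
      field_simp
      rw [sub_add_cancel, div_self ht0.ne', Real.rpow_one]
    rw [e, div_le_iff₀ hS1t]
    linarith
  have e2 : (t - 1) / t * (t / (t - 1)) = 1 := by field_simp
  have e3 : S = (S ^ ((t - 1) / t)) ^ (t / (t - 1)) := by
    rw [← Real.rpow_mul hSpos.le, e2, Real.rpow_one]
  calc S = (S ^ ((t - 1) / t)) ^ (t / (t - 1)) := e3
    _ ≤ (2 * b) ^ (t / (t - 1)) :=
        Real.rpow_le_rpow (Real.rpow_nonneg hSpos.le _) key (by positivity)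
    _ ≤ 2 * a + (2 * b) ^ (t / (t - 1)) := by linarith

/-- Convergence rate `D_ξ = O(δ^{o/t})` for all-at-once Tikhonov regularization
with the a priori parameter choice `α = c_α δ^{o(t−1)/t}` (Proposition 2.2):
under the local smoothness condition (Assumption 2.7) on `D` and the source
condition `ξ = v ∘ 𝐅'(x†,u†)` with `L‖v‖ < 1`, there is a constant `K`
(independent of `δ`) such that every `(xα,uα) ∈ D` satisfying the Tikhonov
minimality estimate satisfies `D_ξ(xα,uα) ≤ K δ^{o/t}`. -/
theorem allAtOnce_Tikhonov_rate_apriori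
    {X V W Y : Type*}
    [NormedAddCommGroup X] [NormedSpace ℝ X] [CompleteSpace X]
    [NormedAddCommGroup V] [NormedSpace ℝ V] [CompleteSpace V]
    [NormedAddCommGroup W] [NormedSpace ℝ W] [CompleteSpace W]
    [NormedAddCommGroup Y] [NormedSpace ℝ Y] [CompleteSpace Y]
    (A : X × V → W) (C : V → Y)
    (xdag : X) (udag : V) (A' : X × V →L[ℝ] W) (C' : V →L[ℝ] Y)
    (hA : HasFDerivAt A A' (xdag, udag)) (hC : HasFDerivAt C C' udag)
    (hAdag : A (xdag, udag) = 0) (y : Y) (hCdag : C udag = y)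
    (ρ m o r q t CL L cα : ℝ)
    (hρ : 0 < ρ) (hm : 1 ≤ m) (ho : 1 ≤ o) (hr : 1 ≤ r) (hq : 1 ≤ q)
    (ht : 1 < t) (hCL : 0 ≤ CL) (hL : 0 ≤ L) (hcα : 0 < cα)
    (x₀ : X) (u₀ : V) (D : Set (X × V))
    (R₂ : X × V → ℝ)
    (hR₂ : ∀ p : X × V, R₂ p = 1 / r * ‖p.1 - x₀‖ ^ r + 1 / q * ‖p.2 - u₀‖ ^ q)
    (ξ : (X × V) →L[ℝ] ℝ)
    (hsub : ∀ p : X × V, R₂ (xdag, udag) + ξ (p.1 - xdag, p.2 - udag) ≤ R₂ p)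
    (Dξ : X × V → ℝ)
    (hDξ : ∀ p : X × V,
      Dξ p = R₂ p - R₂ (xdag, udag) - ξ (p.1 - xdag, p.2 - udag))
    (F' : (X × V) →L[ℝ] W × Y)
    (hF' : F' = A'.prod (C'.comp (ContinuousLinearMap.snd ℝ X V)))
    (v : (W × Y) →L[ℝ] ℝ) (hsc : ξ = v.comp F') (hvsmall : L * ‖v‖ < 1)
    (hsmooth : ∀ p ∈ D, ‖A' (p.1 - xdag, p.2 - udag)‖ + ‖C' (p.2 - udag)‖
        ≤ CL * (ρ / m * ‖A p‖ ^ m + 1 / o * ‖C p.2 - y‖ ^ o) ^ (1 / t)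
          + L * Dξ p) :
    ∃ K : ℝ, ∀ δ : ℝ, 0 < δ → ∀ yδ : Y, ‖y - yδ‖ ≤ δ →
      ∀ xα : X, ∀ uα : V, (xα, uα) ∈ D →
        ρ / m * ‖A (xα, uα)‖ ^ m + 1 / o * ‖C uα - yδ‖ ^ o
            + cα * δ ^ (o * (t - 1) / t) * R₂ (xα, uα)
          ≤ δ ^ o / o + cα * δ ^ (o * (t - 1) / t) * R₂ (xdag, udag) →
        Dξ (xα, uα) ≤ K * δ ^ (o / t) := by
  have ho0 : (0:ℝ) < o := by linarith
  have ht0 : (0:ℝ) < t := by linarith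
  have ht1 : (0:ℝ) < t - 1 := by linarith
  set μ : ℝ := 1 - L * ‖v‖ with hμdef
  have hμ : 0 < μ := by simp only [hμdef]; linarith
  clear_value μ
  set K₁ : ℝ := 2 ^ (o + 2) / o + (2 ^ (o + 1) * cα * (‖v‖ * CL)) ^ (t / (t - 1))
    with hK₁def
  have hK₁0 : 0 ≤ K₁ := by
    have h1 : (0:ℝ) < 2 ^ (o + 2) := Real.rpow_pos_of_pos (by norm_num) _
    have h2 : (0:ℝ) ≤ (2 ^ (o + 1) * cα * (‖v‖ * CL)) ^ (t / (t - 1)) :=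
      Real.rpow_nonneg (by positivity) _
    positivity
  clear_value K₁
  refine ⟨1 / (o * cα * μ) + ‖v‖ * CL * K₁ ^ (1 / t) / μ, ?_⟩
  intro δ hδ yδ hyδ xα uα hD hmin
  set α : ℝ := cα * δ ^ (o * (t - 1) / t) with hα
  have hδE : 0 < δ ^ (o * (t - 1) / t) := Real.rpow_pos_of_pos hδ _
  have hαpos : 0 < α := by rw [hα]; positivity
  clear_value α
  set S : ℝ := ρ / m * ‖A (xα, uα)‖ ^ m + 1 / o * ‖C uα - y‖ ^ o with hSdef
  set T : ℝ := ρ / m * ‖A (xα, uα)‖ ^ m + 1 / o * ‖C uα - yδ‖ ^ o with hTdef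
  have hAm0 : 0 ≤ ρ / m * ‖A (xα, uα)‖ ^ m := by
    have := Real.rpow_nonneg (norm_nonneg (A (xα, uα))) m
    positivity
  have hCy0 : 0 ≤ 1 / o * ‖C uα - y‖ ^ o := by
    have := Real.rpow_nonneg (norm_nonneg (C uα - y)) o
    positivity
  have hCyδ0 : 0 ≤ 1 / o * ‖C uα - yδ‖ ^ o := by
    have := Real.rpow_nonneg (norm_nonneg (C uα - yδ)) o
    positivity
  have hS0 : 0 ≤ S := by rw [hSdef]; linarith
  have hT0 : 0 ≤ T := by rw [hTdef]; linarith
  clear_value S T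
  set d : ℝ := Dξ (xα, uα) with hddef
  have hdd : d = R₂ (xα, uα) - R₂ (xdag, udag) - ξ (xα - xdag, uα - udag) := by
    have := hDξ (xα, uα); simpa using this
  have hd0 : 0 ≤ d := by
    have := hsub (xα, uα); rw [hdd]; simp only at this ⊢; linarith
  clear_value d
  -- bound on |ξ Δ|
  have hsm := hsmooth (xα, uα) hD
  simp only at hsm
  rw [← hSdef, ← hddef] at hsm
  have hξbound : |ξ (xα - xdag, uα - udag)| ≤ ‖v‖ * (CL * S ^ (1 / t) + L * d) := by
    have h1 : ξ (xα - xdag, uα - udag) = v (F' (xα - xdag, uα - udag)) := by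
      rw [hsc]; rfl
    have h2 : ‖F' ((xα - xdag, uα - udag) : X × V)‖
        ≤ ‖A' (xα - xdag, uα - udag)‖ + ‖C' (uα - udag)‖ := by
      rw [hF']
      have he : (A'.prod (C'.comp (ContinuousLinearMap.snd ℝ X V)))
          ((xα - xdag, uα - udag) : X × V)
          = (A' (xα - xdag, uα - udag), C' (uα - udag)) := rfl
      rw [he, Prod.norm_def]
      exact max_le (le_add_of_nonneg_right (norm_nonneg _))
        (le_add_of_nonneg_left (norm_nonneg _))
    calc |ξ (xα - xdag, uα - udag)| = ‖v (F' (xα - xdag, uα - udag))‖ := by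
          rw [h1, Real.norm_eq_abs]
      _ ≤ ‖v‖ * ‖F' ((xα - xdag, uα - udag) : X × V)‖ := v.le_opNorm _
      _ ≤ ‖v‖ * (‖A' (xα - xdag, uα - udag)‖ + ‖C' (uα - udag)‖) := by
          exact mul_le_mul_of_nonneg_left h2 (norm_nonneg v)
      _ ≤ ‖v‖ * (CL * S ^ (1 / t) + L * d) := by
          exact mul_le_mul_of_nonneg_left hsm (norm_nonneg v)
  -- core inequality
  have hcore : T + α * μ * d ≤ δ ^ o / o + α * (‖v‖ * CL) * S ^ (1 / t) := by
    have e1 : α * R₂ (xα, uα)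
        = α * d + α * R₂ (xdag, udag) + α * ξ (xα - xdag, uα - udag) := by
      rw [hdd]; ring
    have e2 : -(ξ (xα - xdag, uα - udag)) ≤ ‖v‖ * (CL * S ^ (1 / t) + L * d) :=
      (neg_le_abs _).trans hξbound
    have e3 : α * -(ξ (xα - xdag, uα - udag))
        ≤ α * (‖v‖ * (CL * S ^ (1 / t) + L * d)) :=
      mul_le_mul_of_nonneg_left e2 hαpos.le
    have e4 : α * (‖v‖ * (CL * S ^ (1 / t) + L * d))
        = α * (‖v‖ * CL) * S ^ (1 / t) + α * (‖v‖ * (L * d)) := by ring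
    have e5 : α * μ * d = α * d - α * (‖v‖ * (L * d)) := by
      rw [hμdef]; ring
    have e6 : α * -(ξ (xα - xdag, uα - udag))
        = -(α * ξ (xα - xdag, uα - udag)) := by ring
    rw [hTdef]
    rw [e6, e4] at e3
    linarith [hmin, e1, e3, e5]
  have hamd : 0 ≤ α * μ * d := by
    have := mul_nonneg (mul_nonneg hαpos.le hμ.le) hd0
    exact this
  have hTcore : T ≤ δ ^ o / o + α * (‖v‖ * CL) * S ^ (1 / t) := by linarith
  -- bound S by T and δ
  have hnorm : ‖C uα - y‖ ≤ ‖C uα - yδ‖ + δ := by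
    have he : C uα - y = C uα - yδ + (yδ - y) := by abel
    calc ‖C uα - y‖ = ‖C uα - yδ + (yδ - y)‖ := by rw [he]
      _ ≤ ‖C uα - yδ‖ + ‖yδ - y‖ := norm_add_le _ _
      _ ≤ ‖C uα - yδ‖ + δ := by
          have : ‖yδ - y‖ = ‖y - yδ‖ := norm_sub_rev _ _
          linarith
  have hCy : ‖C uα - y‖ ^ o ≤ 2 ^ o * (‖C uα - yδ‖ ^ o + δ ^ o) := by
    calc ‖C uα - y‖ ^ o ≤ (‖C uα - yδ‖ + δ) ^ o :=
          Real.rpow_le_rpow (norm_nonneg _) hnorm ho0.le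
      _ ≤ 2 ^ o * (‖C uα - yδ‖ ^ o + δ ^ o) :=
          myRpowAdd o ho (norm_nonneg _) hδ.le
  have h2o1 : (1:ℝ) ≤ 2 ^ o := Real.one_le_rpow (by norm_num) ho0.le
  have h2o0 : (0:ℝ) < 2 ^ o := by linarith
  have hSle : S ≤ 2 ^ o * (T + δ ^ o / o) := by
    have h1 : 1 / o * ‖C uα - y‖ ^ o ≤ 1 / o * (2 ^ o * (‖C uα - yδ‖ ^ o + δ ^ o)) :=
      mul_le_mul_of_nonneg_left hCy (by positivity)
    have h2 : 1 / o * (2 ^ o * (‖C uα - yδ‖ ^ o + δ ^ o))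
        = 2 ^ o * (1 / o * ‖C uα - yδ‖ ^ o) + 2 ^ o * (δ ^ o / o) := by ring
    have h3 : ρ / m * ‖A (xα, uα)‖ ^ m ≤ 2 ^ o * (ρ / m * ‖A (xα, uα)‖ ^ m) :=
      le_mul_of_one_le_left hAm0 h2o1
    have h4 : 2 ^ o * (T + δ ^ o / o) = 2 ^ o * (ρ / m * ‖A (xα, uα)‖ ^ m)
        + 2 ^ o * (1 / o * ‖C uα - yδ‖ ^ o) + 2 ^ o * (δ ^ o / o) := by
      rw [hTdef]; ring
    rw [hSdef]
    linarith
  have habS : S ≤ 2 ^ (o + 1) * (δ ^ o / o)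
      + 2 ^ o * (α * (‖v‖ * CL)) * S ^ (1 / t) := by
    have hT2 : 2 ^ o * T ≤ 2 ^ o * (δ ^ o / o + α * (‖v‖ * CL) * S ^ (1 / t)) :=
      mul_le_mul_of_nonneg_left hTcore h2o0.le
    have he : (2:ℝ) ^ (o + 1) = 2 ^ o * 2 := by
      rw [Real.rpow_add (by norm_num : (0:ℝ) < 2), Real.rpow_one]
    have e1 : (2:ℝ) ^ o * (T + δ ^ o / o) = 2 ^ o * T + 2 ^ o * (δ ^ o / o) := by
      ring
    have e2 : (2:ℝ) ^ o * (δ ^ o / o + α * (‖v‖ * CL) * S ^ (1 / t))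
        = 2 ^ o * (δ ^ o / o) + 2 ^ o * (α * (‖v‖ * CL)) * S ^ (1 / t) := by
      ring
    have e3 : (2:ℝ) ^ (o + 1) * (δ ^ o / o)
        = 2 ^ o * (δ ^ o / o) + 2 ^ o * (δ ^ o / o) := by
      rw [he]; ring
    linarith [hSle, hT2]
  have habsorb : S ≤ 2 * (2 ^ (o + 1) * (δ ^ o / o))
      + (2 * (2 ^ o * (α * (‖v‖ * CL)))) ^ (t / (t - 1)) :=
    myAbsorb ht (by positivity) (by positivity) habS
  -- identify the RHS as K₁ * δ ^ o
  have hδo : δ ^ (o * (t - 1) / t) * δ ^ (o / t) = δ ^ o := by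
    rw [← Real.rpow_add hδ]
    congr 1
    field_simp
    ring
  have hrhs : 2 * (2 ^ (o + 1) * (δ ^ o / o))
      + (2 * (2 ^ o * (α * (‖v‖ * CL)))) ^ (t / (t - 1)) = K₁ * δ ^ o := by
    have hb1 : (2:ℝ) * (2 ^ o * (α * (‖v‖ * CL)))
        = (2 ^ (o + 1) * cα * (‖v‖ * CL)) * δ ^ (o * (t - 1) / t) := by
      rw [hα, Real.rpow_add (by norm_num : (0:ℝ) < 2), Real.rpow_one]
      ring
    have hb2 : ((2 ^ (o + 1) * cα * (‖v‖ * CL)) * δ ^ (o * (t - 1) / t)) ^ (t / (t - 1))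
        = (2 ^ (o + 1) * cα * (‖v‖ * CL)) ^ (t / (t - 1))
          * (δ ^ (o * (t - 1) / t)) ^ (t / (t - 1)) :=
      Real.mul_rpow (by positivity) hδE.le
    have hb3 : (δ ^ (o * (t - 1) / t)) ^ (t / (t - 1)) = δ ^ o := by
      rw [← Real.rpow_mul hδ.le]
      congr 1
      field_simp
    have hb4 : (2:ℝ) * (2 ^ (o + 1) * (δ ^ o / o)) = 2 ^ (o + 2) / o * δ ^ o := by
      have h21 : (2:ℝ) ^ (o + 1) * 2 = 2 ^ (o + 1) * 2 ^ (1:ℝ) := by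
        rw [Real.rpow_one]
      have : (2:ℝ) ^ (o + 2) = 2 ^ (o + 1) * 2 := by
        rw [h21, ← Real.rpow_add (by norm_num : (0:ℝ) < 2)]
        congr 1
        ring
      rw [this]; ring
    rw [hb1, hb2, hb3, hb4, hK₁def]
    ring
  have hSK : S ≤ K₁ * δ ^ o := hrhs ▸ habsorb
  have hS1t : S ^ (1 / t) ≤ K₁ ^ (1 / t) * δ ^ (o / t) := by
    calc S ^ (1 / t) ≤ (K₁ * δ ^ o) ^ (1 / t) :=
          Real.rpow_le_rpow hS0 hSK (by positivity)
      _ = K₁ ^ (1 / t) * (δ ^ o) ^ (1 / t) :=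
          Real.mul_rpow hK₁0 (Real.rpow_nonneg hδ.le o)
      _ = K₁ ^ (1 / t) * δ ^ (o / t) := by
          rw [← Real.rpow_mul hδ.le]
          congr 2
          field_simp
  -- final estimate
  have hfin : α * μ * d ≤ δ ^ o / o + α * (‖v‖ * CL) * (K₁ ^ (1 / t) * δ ^ (o / t)) := by
    have h1 : α * (‖v‖ * CL) * S ^ (1 / t)
        ≤ α * (‖v‖ * CL) * (K₁ ^ (1 / t) * δ ^ (o / t)) :=
      mul_le_mul_of_nonneg_left hS1t (by positivity)
    linarith [hcore, hT0]
  have hgoal : α * μ * d ≤ α * μ *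
      ((1 / (o * cα * μ) + ‖v‖ * CL * K₁ ^ (1 / t) / μ) * δ ^ (o / t)) := by
    have hexp : α * μ * ((1 / (o * cα * μ) + ‖v‖ * CL * K₁ ^ (1 / t) / μ) * δ ^ (o / t))
        = δ ^ (o * (t - 1) / t) * δ ^ (o / t) / o
          + α * (‖v‖ * CL) * (K₁ ^ (1 / t) * δ ^ (o / t)) := by
      rw [hα]
      field_simp
    rw [hexp, hδo]
    exact hfin
  exact le_of_mul_le_mul_left hgoal (by positivity)
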